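/- The pair of functions ū1(x) = 0 for |x| ≥ 1 and ū1(x) = -(1-|x|)²/2 for |x| < 1, together with ū2(x) = 0, satisfies the system u1 = -(u1'/2 + u2')·u1' and u2 = -(u2'/2 + u1')·u2' at every x in ℝ where ū1 is differentiable (i.e., at every x ≠ 0). -/

import Mathlib

open Filter Asymptotics

theorem bar_pair_solves_HJ_system_ae :
    let u1 : ℝ → ℝ := fun x => if 1 ≤ |x| then 0 else -(1 - |x|) ^ 2 / 2
    let u2 : ℝ → ℝ := fun _ => 0
    ∀ x : ℝ, x ≠ 0 →
      DifferentiableAt ℝ u1 x ∧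
      u1 x = -(deriv u1 x / 2 + deriv u2 x) * deriv u1 x ∧
      u2 x = -(deriv u2 x / 2 + deriv u1 x) * deriv u2 x := by
  intro u1 u2 x hx
  have hu2d : deriv u2 x = 0 := deriv_const x 0
  have hu2x : u2 x = 0 := rfl
  rcases lt_trichotomy (|x|) 1 with hlt | heq | hgt
  · -- |x| < 1, x ≠ 0
    rcases hx.lt_or_gt with hneg | hpos
    · -- -1 < x < 0 : u1 y = -(1+y)^2/2 near x, deriv = -(1+x)
      have hmem : x ∈ Set.Ioo (-1 : ℝ) 0 := ⟨by rw [abs_of_neg hneg] at hlt; linarith, hneg⟩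
      have hev : u1 =ᶠ[nhds x] fun y => -(1 + y) ^ 2 / 2 := by
        filter_upwards [Ioo_mem_nhds hmem.1 hmem.2] with y hy
        have hy' : |y| = -y := abs_of_neg hy.2
        have : ¬ (1 ≤ |y|) := by rw [hy']; linarith [hy.1]
        simp only [u1, if_neg this, hy']
        ring
      have hder : HasDerivAt (fun y : ℝ => -(1 + y) ^ 2 / 2) (-(1 + x)) x := by
        have h1 : HasDerivAt (fun y : ℝ => 1 + y) 1 x := (hasDerivAt_id x).const_add 1
        have h2 : HasDerivAt (fun y : ℝ => -(1 + y) ^ 2 / 2) (-(↑(2:ℕ) * (1 + x) ^ (2 - 1) * 1) / 2) x := ((h1.pow 2).neg).div_const 2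
        convert h2 using 1
        ring
      have hd : HasDerivAt u1 (-(1 + x)) x := hder.congr_of_eventuallyEq hev
      have hdx : deriv u1 x = -(1 + x) := hd.deriv
      have hnot : ¬ (1 ≤ |x|) := not_le.mpr hlt
      refine ⟨hd.differentiableAt, ?_, ?_⟩
      · simp only [u1, if_neg hnot, hdx, hu2d, abs_of_neg hneg]
        ring
      · simp [hu2x, hu2d]
    · -- 0 < x < 1 : u1 y = -(1-y)^2/2 near x, deriv = 1 - x
      have hmem : x ∈ Set.Ioo (0 : ℝ) 1 := ⟨hpos, by rw [abs_of_pos hpos] at hlt; exact hlt⟩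
      have hev : u1 =ᶠ[nhds x] fun y => -(1 - y) ^ 2 / 2 := by
        filter_upwards [Ioo_mem_nhds hmem.1 hmem.2] with y hy
        have hy' : |y| = y := abs_of_pos hy.1
        have : ¬ (1 ≤ |y|) := by rw [hy']; linarith [hy.2]
        simp only [u1, if_neg this, hy']
      have hder : HasDerivAt (fun y : ℝ => -(1 - y) ^ 2 / 2) (1 - x) x := by
        have h1 : HasDerivAt (fun y : ℝ => 1 - y) (-1) x := (hasDerivAt_id x).const_sub 1
        have h2 : HasDerivAt (fun y : ℝ => -(1 - y) ^ 2 / 2) (-(↑(2:ℕ) * (1 - x) ^ (2 - 1) * (-1)) / 2) x := ((h1.pow 2).neg).div_const 2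
        convert h2 using 1
        ring
      have hd : HasDerivAt u1 (1 - x) x := hder.congr_of_eventuallyEq hev
      have hdx : deriv u1 x = 1 - x := hd.deriv
      have hnot : ¬ (1 ≤ |x|) := not_le.mpr hlt
      refine ⟨hd.differentiableAt, ?_, ?_⟩
      · simp only [u1, if_neg hnot, hdx, hu2d, abs_of_pos hpos]
        ring
      · simp [hu2x, hu2d]
  · -- |x| = 1 : corner point, derivative 0
    have hu1x : u1 x = 0 := by simp [u1, heq.ge]
    have hbound : ∀ᶠ y in nhds x, ‖u1 y‖ ≤ ‖(y - x) ^ 2‖ := by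
      rcases abs_eq (by norm_num : (0:ℝ) ≤ 1) |>.mp heq with h1 | h1
      · -- x = 1
        filter_upwards [Ioo_mem_nhds (by rw [h1]; norm_num : (0:ℝ) < x)
          (by rw [h1]; norm_num : x < 2)] with y hy
        by_cases h : 1 ≤ |y|
        · simp [u1, h]; positivity
        · have hy' : |y| = y := abs_of_pos hy.1
          simp only [u1, if_neg h, h1]
          rw [hy']
          rw [Real.norm_eq_abs, Real.norm_eq_abs, abs_div]
          rw [abs_of_nonpos (by nlinarith : -(1 - y) ^ 2 ≤ 0)]
          rw [abs_of_nonneg (by positivity : (0:ℝ) ≤ (y - 1)^2)]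
          rw [abs_two]; nlinarith [sq_nonneg (1 - y)]
      · -- x = -1
        filter_upwards [Ioo_mem_nhds (by rw [h1]; norm_num : (-2:ℝ) < x)
          (by rw [h1]; norm_num : x < 0)] with y hy
        by_cases h : 1 ≤ |y|
        · simp [u1, h]; positivity
        · have hy' : |y| = -y := abs_of_neg hy.2
          simp only [u1, if_neg h, h1]
          rw [hy']
          rw [Real.norm_eq_abs, Real.norm_eq_abs, abs_div]
          rw [abs_of_nonpos (by nlinarith : -(1 - -y) ^ 2 ≤ 0)]
          rw [abs_of_nonneg (by positivity : (0:ℝ) ≤ (y - -1)^2)]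
          rw [abs_two]; nlinarith [sq_nonneg (1 + y)]
    have hO : (fun y => u1 y) =O[nhds x] fun y => (y - x) ^ 2 :=
      IsBigO.of_bound 1 (by filter_upwards [hbound] with y hy; simpa using hy)
    have ho2 : (fun y : ℝ => (y - x) ^ 2) =o[nhds x] fun y => y - x := by
      have h1 : (fun y : ℝ => y - x) =o[nhds x] fun _ => (1 : ℝ) := by
        rw [isLittleO_one_iff]
        have : Filter.Tendsto (fun y : ℝ => y - x) (nhds x) (nhds (x - x)) :=
          (continuous_id.sub continuous_const).tendsto x
        simpa using this
      have := (isBigO_refl (fun y : ℝ => y - x) (nhds x)).mul_isLittleO h1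
      simpa [pow_two] using this
    have ho : (fun y => u1 y) =o[nhds x] fun y => y - x := hO.trans_isLittleO ho2
    have hd : HasDerivAt u1 0 x := by
      rw [hasDerivAt_iff_isLittleO]
      simpa [hu1x] using ho
    have hdx : deriv u1 x = 0 := hd.deriv
    refine ⟨hd.differentiableAt, ?_, ?_⟩
    · simp [hu1x, hdx, hu2d]
    · simp [hu2x, hu2d]
  · -- |x| > 1 : u1 is locally 0
    have hev : u1 =ᶠ[nhds x] fun _ => (0 : ℝ) := by
      have hopen : IsOpen {y : ℝ | 1 < |y|} := isOpen_lt continuous_const continuous_abs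
      filter_upwards [hopen.mem_nhds hgt] with y hy
      simp [u1, le_of_lt hy]
    have hd : HasDerivAt u1 0 x := (hasDerivAt_const x 0).congr_of_eventuallyEq hev
    have hdx : deriv u1 x = 0 := hd.deriv
    have hu1x : u1 x = 0 := by simp [u1, le_of_lt hgt]
    refine ⟨hd.differentiableAt, ?_, ?_⟩
    · simp [hu1x, hdx, hu2d]
    · simp [hu2x, hu2d]
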